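/- Let C be the free category with finite (strict monoidal) products on a countable set of generators {p₁, p₂, ...}. The functor H : C → Set_ω determined by sending pₙ to the n-th prime number and preserving the finite product structure (with product of objects given by multiplication and products of arrows defined via the lexicographic bijection) is faithful. -/

import Mathlib

open CategoryTheory

/-- The category `Set_ω`: objects are natural numbers, morphisms `n → m` are
functions `Fin n → Fin m`. Its finite product structure is given by
multiplication on objects, with projections `k̂¹(i) = ⌊i/m⌋`, `k̂²(i) = i mod m`
and terminal object `1`. -/
abbrev SetOmega := ℕ

instance : SmallCategory SetOmega where
  Hom n m := Fin n → Fin m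
  id _ := id
  comp f g := g ∘ f

namespace Stmt13Aux

open Limits

abbrev FreeFP := List ℕ+

@[ext]
structure FHom (a b : FreeFP) where
  toFun : Fin (List.length (α := ℕ+) b) → Fin (List.length (α := ℕ+) a)
  eq : ∀ j, List.get (α := ℕ+) a (toFun j) = List.get b j

instance : SmallCategory FreeFP where
  Hom := FHom
  id a := ⟨_root_.id, fun _ => rfl⟩
  comp f g := ⟨f.toFun ∘ g.toFun, fun j => (f.eq _).trans (g.eq j)⟩

@[simp] lemma id_toFun (a : FreeFP) (k) : (𝟙 a : FHom a a).toFun k = k := rfl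
@[simp] lemma comp_toFun {a b c : FreeFP} (f : a ⟶ b) (g : b ⟶ c) (k) :
    (f ≫ g).toFun k = f.toFun (g.toFun k) := rfl

/-- `[]` is terminal. -/
def emptyIsTerminal : IsTerminal (([] : List ℕ+) : FreeFP) :=
  IsTerminal.ofUniqueHom (fun a => ⟨fun j => j.elim0, fun j => j.elim0⟩)
    (fun a m => FHom.ext (funext fun j => j.elim0))

instance : HasTerminal FreeFP := emptyIsTerminal.hasTerminal

def appLen (a b : FreeFP) :
    List.length (α := ℕ+) (a ++ b) = List.length (α := ℕ+) a + List.length (α := ℕ+) b :=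
  List.length_append ..

/-- first projection `a ++ b ⟶ a`. -/
def ffst (a b : FreeFP) : (a ++ b : FreeFP) ⟶ a where
  toFun j := ⟨j.1, by have := j.2; rw [appLen] ; omega⟩
  eq j := by
    have : j.1 < List.length (α := ℕ+) a := j.2
    simp [List.get_eq_getElem, List.getElem_append, this]

def fsnd (a b : FreeFP) : (a ++ b : FreeFP) ⟶ b where
  toFun j := ⟨List.length (α := ℕ+) a + j.1, by have := j.2; rw [appLen]; omega⟩
  eq j := by
    simp [List.get_eq_getElem, List.getElem_append]

def flift {x a b : FreeFP} (f : x ⟶ a) (g : x ⟶ b) : x ⟶ (a ++ b : FreeFP) where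
  toFun k :=
    if h : k.1 < List.length (α := ℕ+) a then f.toFun ⟨k.1, h⟩
    else g.toFun ⟨k.1 - List.length (α := ℕ+) a, by have := k.2; simp only [List.length_append] at this; omega⟩
  eq k := by
    by_cases h : k.1 < List.length (α := ℕ+) a
    · rw [dif_pos h, f.eq]
      simp [List.get_eq_getElem, List.getElem_append, h]
    · rw [dif_neg h, g.eq]
      simp only [List.get_eq_getElem]
      rw [List.getElem_append_right (by omega)]

/-- the binary fan on `a ++ b`. -/
def prodFan (a b : FreeFP) : BinaryFan a b := BinaryFan.mk (ffst a b) (fsnd a b)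

def prodFanIsLimit (a b : FreeFP) : IsLimit (prodFan a b) := by
  refine BinaryFan.isLimitMk (fun s => flift s.fst s.snd) (fun s => ?_) (fun s => ?_) (fun s m h1 h2 => ?_)
  · refine FHom.ext (funext fun j => ?_)
    have h : j.1 < List.length (α := ℕ+) a := j.2
    simp [prodFan, flift, ffst, h]
  · refine FHom.ext (funext fun j => ?_)
    simp [prodFan, flift, fsnd]
  · refine FHom.ext (funext fun k => ?_)
    by_cases h : k.1 < List.length (α := ℕ+) a
    · have := congrArg (fun z => FHom.toFun z ⟨k.1, h⟩) h1
      simpa [prodFan, flift, ffst, h, Fin.ext_iff] using this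
    · have hlt : k.1 - List.length (α := ℕ+) a < List.length (α := ℕ+) b := by
        have := k.2; simp only [List.length_append] at this; omega
      have := congrArg (fun z => FHom.toFun z ⟨k.1 - List.length (α := ℕ+) a, hlt⟩) h2
      simp only [prodFan, comp_toFun, fsnd] at this
      simp only [flift, dif_neg h]
      rw [← this]
      congr 1
      ext
      simp
      omega

instance : HasBinaryProducts FreeFP := by
  have : ∀ {X Y : FreeFP}, HasLimit (pair X Y) := fun {X Y} => HasLimit.mk ⟨_, prodFanIsLimit X Y⟩
  exact hasBinaryProducts_of_hasLimit_pair _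

instance : HasFiniteProducts FreeFP := hasFiniteProducts_of_has_binary_and_terminal


/-! ### Interpretation of `FreeFP` in any category with finite products -/

section Interp

variable {E : Type} [SmallCategory E] [HasFiniteProducts E] (q : ℕ+ → E)

/-- Object part, arranged so that `iObj q [i] = q i` definitionally. -/
noncomputable def iObj : List ℕ+ → E
  | [] => ⊤_ E
  | [i] => q i
  | i :: j :: l => q i ⨯ iObj (j :: l)

@[simp] lemma iObj_singleton (i : ℕ+) : iObj q [i] = q i := rfl

/-- Projections. -/
noncomputable def iProj : ∀ (l : List ℕ+) (k : Fin l.length), iObj q l ⟶ q (l.get k)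
  | [_], ⟨0, _⟩ => 𝟙 _
  | _ :: _ :: _, ⟨0, _⟩ => prod.fst
  | _ :: j :: l, ⟨k+1, h⟩ => prod.snd ≫ iProj (j :: l) ⟨k, Nat.lt_of_succ_lt_succ h⟩

/-- Pairing. -/
noncomputable def iPair : ∀ (l : List ℕ+) {X : E} (_ : ∀ k : Fin l.length, X ⟶ q (l.get k)), X ⟶ iObj q l
  | [], X, _ => terminal.from X
  | [_], _, t => t ⟨0, Nat.zero_lt_one⟩
  | _ :: j :: l, _, t =>
      prod.lift (t ⟨0, Nat.succ_pos _⟩) (iPair (j :: l) (fun k => t k.succ))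

@[simp] lemma iPair_proj : ∀ (l : List ℕ+) {X : E} (t : ∀ k : Fin l.length, X ⟶ q (l.get k))
    (k : Fin l.length), iPair q l t ≫ iProj q l k = t k
  | [_], X, t, ⟨0, _⟩ => by simp [iPair, iProj]
  | _ :: _ :: _, X, t, ⟨0, _⟩ => by simp [iPair, iProj]; exact prod.lift_fst _ _
  | _ :: j :: l, X, t, ⟨k+1, h⟩ => by
      simp only [iPair, iProj, prod.lift_snd_assoc]
      exact (prod.lift_snd_assoc _ _ _).trans (iPair_proj (j :: l) _ ⟨k, Nat.lt_of_succ_lt_succ h⟩)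

lemma iHomExt : ∀ (l : List ℕ+) {X : E} (f g : X ⟶ iObj q l),
    (∀ k, f ≫ iProj q l k = g ≫ iProj q l k) → f = g
  | [], X, f, g, _ => terminal.hom_ext f g
  | [i], X, f, g, h => by
      have h0 := h ⟨0, Nat.zero_lt_one⟩; simp only [iProj] at h0
      erw [Category.comp_id, Category.comp_id] at h0; exact h0
  | i :: j :: l, X, f, g, h => by
      apply Limits.prod.hom_ext
      · exact h ⟨0, Nat.succ_pos _⟩
      · exact iHomExt (j :: l) _ _ (fun k => by
          exact (Category.assoc _ _ _).trans ((h k.succ).trans (Category.assoc _ _ _).symm))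

/-- The interpretation functor. -/
noncomputable def interp : FreeFP ⥤ E where
  obj := iObj q
  map {a b} f := iPair q b (fun k => iProj q a (f.toFun k) ≫ eqToHom (by rw [f.eq]))
  map_id a := by
    apply iHomExt
    intro k
    simp
  map_comp {a b c} f g := by
    apply iHomExt
    intro k
    show iPair q c _ ≫ iProj q c k = (iPair q b _ ≫ iPair q c _) ≫ iProj q c k
    rw [iPair_proj, Category.assoc, iPair_proj, ← Category.assoc, iPair_proj, Category.assoc,
      eqToHom_trans]
    rfl

@[simp] lemma interp_map_proj {a b : FreeFP} (f : a ⟶ b) (k) :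
    (interp q).map f ≫ iProj q b k = iProj q a (f.toFun k) ≫ eqToHom (by rw [f.eq]) := by
  simp [interp]


section PreservesProd

/-- `interp` preserves the terminal object. -/
noncomputable instance interpPreservesEmpty :
    PreservesLimit (Functor.empty.{0} FreeFP) (interp q) :=
  preservesTerminal_of_iso (interp q)
    ((interp q).mapIso (terminalIsTerminal.uniqueUpToIso emptyIsTerminal))

lemma length_lt_of_append_left {a b : FreeFP} {k : Fin (List.length (α := ℕ+) (a ++ b))}
    (h : ¬ k.1 < List.length (α := ℕ+) a) :
    k.1 - List.length (α := ℕ+) a < List.length (α := ℕ+) b := by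
  have := k.2; simp only [List.length_append] at this; omega

lemma get_append_left {a b : FreeFP} (k : Fin (List.length (α := ℕ+) (a ++ b)))
    (h : k.1 < List.length (α := ℕ+) a) :
    List.get (α := ℕ+) (a ++ b) k = List.get a ⟨k.1, h⟩ := by
  simp [List.get_eq_getElem, List.getElem_append, h]

lemma get_append_right {a b : FreeFP} (k : Fin (List.length (α := ℕ+) (a ++ b)))
    (h : ¬ k.1 < List.length (α := ℕ+) a) :
    List.get (α := ℕ+) (a ++ b) k = List.get b ⟨k.1 - List.length (α := ℕ+) a, length_lt_of_append_left h⟩ := by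
  simp only [List.get_eq_getElem]
  rw [List.getElem_append_right (by omega)]

@[simp] lemma ffst_toFun {a b : FreeFP} (k : Fin (List.length (α := ℕ+) a)) :
    (ffst a b).toFun k = ⟨k.1, by simp only [List.length_append]; omega⟩ := rfl

@[simp] lemma fsnd_toFun {a b : FreeFP} (k : Fin (List.length (α := ℕ+) b)) :
    (fsnd a b).toFun k = ⟨List.length (α := ℕ+) a + k.1, by simp only [List.length_append]; omega⟩ := rfl

lemma iProj_congr (l : List ℕ+) {k k' : Fin (List.length (α := ℕ+) l)} (hk : k = k') :
    iProj q l k = iProj q l k' ≫ eqToHom (by rw [hk]) := by subst hk; simp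

/-- the mapped binary fan is a limit. -/
noncomputable def interpProdIsLimit (a b : FreeFP) :
    IsLimit (BinaryFan.mk ((interp q).map (ffst a b)) ((interp q).map (fsnd a b))) := by
  refine BinaryFan.isLimitMk
    (fun s => iPair q (a ++ b) (fun k =>
      if h : k.1 < List.length (α := ℕ+) a then
        s.fst ≫ iProj q a ⟨k.1, h⟩ ≫ eqToHom (by rw [get_append_left k h])
      else
        s.snd ≫ iProj q b ⟨k.1 - List.length (α := ℕ+) a, length_lt_of_append_left h⟩ ≫
          eqToHom (by rw [get_append_right k h]))) (fun s => ?_) (fun s => ?_) (fun s m h1 h2 => ?_)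
  · apply iHomExt
    intro k
    erw [Category.assoc, interp_map_proj, ← Category.assoc, iPair_proj]
    have h : ((ffst a b).toFun k).1 < List.length (α := ℕ+) a := k.2
    rw [dif_pos h]
    simp [eqToHom_trans]
    erw [Category.assoc, Category.assoc, eqToHom_trans, eqToHom_refl, Category.comp_id]
    rfl
  · apply iHomExt
    intro k
    erw [Category.assoc, interp_map_proj, ← Category.assoc, iPair_proj]
    have h : ¬ ((fsnd a b).toFun k).1 < List.length (α := ℕ+) a := by
      simp only [fsnd_toFun]; omega
    rw [dif_neg h]
    have hkk : (⟨((fsnd a b).toFun k).1 - List.length (α := ℕ+) a, length_lt_of_append_left h⟩ : Fin (List.length (α := ℕ+) b)) = k := by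
      ext; simp
    rw [iProj_congr q b hkk]
    simp [eqToHom_trans]
    erw [Category.assoc, Category.assoc, eqToHom_trans]
    congr 1
    exact (iProj_congr q b (Fin.ext (by simp))).symm
  · apply iHomExt
    intro k
    rw [iPair_proj]
    by_cases h : k.1 < List.length (α := ℕ+) a
    · rw [dif_pos h]
      have hk : (ffst a b).toFun ⟨k.1, h⟩ = k := by ext; rfl
      have := congrArg (fun z => z ≫ iProj q a ⟨k.1, h⟩) h1
      beta_reduce at this
      erw [Category.assoc, interp_map_proj, ← Category.assoc, comp_eqToHom_iff] at this
      erw [Category.assoc] at this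
      exact this
    · rw [dif_neg h]
      set kb : Fin (List.length (α := ℕ+) b) := ⟨k.1 - List.length (α := ℕ+) a, length_lt_of_append_left h⟩ with hkb
      have hk : (fsnd a b).toFun kb = k := by
        ext; simp only [fsnd_toFun, hkb]
        have := k.2; simp only [List.length_append] at this
        omega
      have := congrArg (fun z => z ≫ iProj q b kb) h2
      beta_reduce at this
      erw [Category.assoc, interp_map_proj, ← Category.assoc, comp_eqToHom_iff,
        iProj_congr q (a ++ b) hk, ← Category.assoc, comp_eqToHom_iff] at this
      erw [this]
      simp [eqToHom_trans]
      erw [eqToHom_trans, Category.assoc]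
      rfl

noncomputable instance interpPreservesPair (a b : FreeFP) :
    PreservesLimit (pair a b) (interp q) :=
  preservesLimit_of_preserves_limit_cone (prodFanIsLimit a b)
    ((isLimitMapConeBinaryFanEquiv (interp q) (ffst a b) (fsnd a b)).symm
      (interpProdIsLimit q a b))

instance interpPreservesFiniteProducts : PreservesFiniteProducts (interp q) := by
  have h1 : PreservesLimitsOfShape (Discrete WalkingPair) (interp q) :=
    ⟨fun {K} => preservesLimit_of_iso_diagram (interp q) (diagramIsoPair K).symm⟩
  have h2 : PreservesLimitsOfShape (Discrete.{0} PEmpty) (interp q) :=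
    preservesLimitsOfShape_pempty_of_preservesTerminal _
  exact PreservesFiniteProducts.of_preserves_binary_and_terminal (interp q)

end PreservesProd

end Interp

/-! ### Finite products in `SetOmega` -/

section SetOmegaProd

def soTerminal : IsTerminal (1 : SetOmega) :=
  IsTerminal.ofUniqueHom (fun _ _ => ⟨0, Nat.one_pos⟩)
    (fun _ _ => funext fun _ => Subsingleton.elim _ _)

instance : HasTerminal SetOmega := soTerminal.hasTerminal

def soFan (X Y : SetOmega) : BinaryFan X Y :=
  BinaryFan.mk (P := (X * Y : ℕ))
    (fun z => (finProdFinEquiv.symm z).1) (fun z => (finProdFinEquiv.symm z).2)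

def soFanIsLimit (X Y : SetOmega) : IsLimit (soFan X Y) := by
  refine BinaryFan.isLimitMk (fun s x => finProdFinEquiv (s.fst x, s.snd x))
    (fun s => funext fun x => ?_) (fun s => funext fun x => ?_) (fun s m h1 h2 => funext fun x => ?_)
  · show (finProdFinEquiv.symm (finProdFinEquiv _)).1 = s.fst x
    erw [Equiv.symm_apply_apply]
  · show (finProdFinEquiv.symm (finProdFinEquiv _)).2 = s.snd x
    erw [Equiv.symm_apply_apply]
  · apply finProdFinEquiv.symm.injective
    rw [Equiv.symm_apply_apply]
    exact Prod.ext (congrFun h1 x) (congrFun h2 x)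

instance : HasBinaryProducts SetOmega := by
  have : ∀ {X Y : SetOmega}, HasLimit (pair X Y) := fun {X Y} => HasLimit.mk ⟨_, soFanIsLimit X Y⟩
  exact hasBinaryProducts_of_hasLimit_pair _

instance : HasFiniteProducts SetOmega := hasFiniteProducts_of_has_binary_and_terminal

end SetOmegaProd

/-! ### Faithfulness of the interpretation in `SetOmega` -/

section Faithful

/-- application of a `SetOmega` morphism -/
abbrev app {n m : SetOmega} (f : n ⟶ m) : Fin n → Fin m := f

@[simp] lemma app_comp {n m k : SetOmega} (f : n ⟶ m) (g : m ⟶ k) (x : Fin n) :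
    app (f ≫ g) x = app g (app f x) := rfl

@[simp] lemma app_eqToHom_val {n m : SetOmega} (h : n = m) (x : Fin n) :
    (app (eqToHom h) x).1 = x.1 := by subst h; rfl

/-- the generator assignment: the `i`-th prime. -/
noncomputable def qS : ℕ+ → SetOmega := fun i => Nat.nth Nat.Prime ((i : ℕ) - 1)

lemma two_le_qS (i : ℕ+) : 2 ≤ qS i := (Nat.prime_nth_prime _).two_le

lemma exists_elem : ∀ (l : List ℕ+) (t : ∀ k : Fin l.length, Fin (qS (l.get k))),
    ∃ x : Fin (iObj qS l), ∀ k, app (iProj qS l k) x = t k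
  | [], _ => ⟨app (terminal.from (1 : SetOmega)) ⟨0, Nat.one_pos⟩, fun k => k.elim0⟩
  | [i], t => ⟨t ⟨0, Nat.one_pos⟩, fun k => by
      match k with
      | ⟨0, _⟩ => rfl⟩
  | i :: j :: l, t => by
      obtain ⟨x', hx'⟩ := exists_elem (j :: l) (fun k => t k.succ)
      let c₁ : (1 : SetOmega) ⟶ qS i := fun _ => t ⟨0, Nat.succ_pos _⟩
      let c₂ : (1 : SetOmega) ⟶ iObj qS (j :: l) := fun _ => x'
      refine ⟨app (prod.lift c₁ c₂) ⟨0, Nat.one_pos⟩, fun k => ?_⟩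
      match k with
      | ⟨0, _⟩ =>
        show app (prod.lift c₁ c₂ ≫ (prod.fst : qS i ⨯ iObj qS (j :: l) ⟶ qS i)) _ = _
        rw [prod.lift_fst]
      | ⟨k'+1, hk⟩ =>
        show app (iProj qS (j :: l) _) (app (prod.lift c₁ c₂ ≫ prod.snd) _) = _
        rw [prod.lift_snd]
        exact hx' ⟨k', Nat.lt_of_succ_lt_succ hk⟩

lemma interp_qS_faithful : (interp qS).Faithful := by
  constructor
  intro a b f g hfg
  refine FHom.ext (funext fun j => ?_)
  by_contra hne
  have h2f := two_le_qS (a.get (f.toFun j))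
  have h2g := two_le_qS (a.get (g.toFun j))
  obtain ⟨x, hx⟩ := exists_elem a (fun k =>
    if k = f.toFun j then ⟨0, lt_of_lt_of_le Nat.zero_lt_two (two_le_qS _)⟩
    else ⟨1, lt_of_lt_of_le Nat.one_lt_two (two_le_qS _)⟩)
  have hcf : (app (iProj qS b j) (app ((interp qS).map f) x)).1 = 0 := by
    have h := interp_map_proj qS f j
    have := congrArg (fun z => (app z x).1) h
    simp only [app_comp] at this
    erw [this, app_eqToHom_val, hx, if_pos rfl]
  have hcg : (app (iProj qS b j) (app ((interp qS).map g) x)).1 = 1 := by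
    have h := interp_map_proj qS g j
    have := congrArg (fun z => (app z x).1) h
    simp only [app_comp] at this
    erw [this, app_eqToHom_val, hx, if_neg (fun hh => hne hh.symm)]
  rw [hfg] at hcf
  rw [hcf] at hcg
  exact Nat.zero_ne_one hcg

end Faithful

end Stmt13Aux


open Stmt13Aux

/-- If `C` is the free category with finite products on countably many
generators `p₁, p₂, …` (freeness: for every small category `D` with finite
products and every assignment `q` of the generators there is a
finite-product-preserving functor `C ⥤ D` sending `pₙ` to `qₙ`, unique up to
natural isomorphism), then any finite-product-preserving functor
`H : C ⥤ Set_ω` sending `pₙ` to the `n`-th prime is faithful. -/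
theorem stmt13 (C : Type) [SmallCategory C] [Limits.HasFiniteProducts C]
    (p : ℕ+ → C)
    (hfree : ∀ (D : Type) [SmallCategory D] [Limits.HasFiniteProducts D]
        (q : ℕ+ → D),
      (∃ F : C ⥤ D, Nonempty (Limits.PreservesFiniteProducts F) ∧
        ∀ i, F.obj (p i) = q i) ∧
      (∀ F G : C ⥤ D,
        Limits.PreservesFiniteProducts F → Limits.PreservesFiniteProducts G →
        (∀ i, F.obj (p i) = q i) → (∀ i, G.obj (p i) = q i) →
        Nonempty (F ≅ G)))
    (H : C ⥤ SetOmega)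
    (hH : Limits.PreservesFiniteProducts H)
    (hobj : ∀ i : ℕ+, H.obj (p i) = Nat.nth Nat.Prime ((i : ℕ) - 1)) :
    H.Faithful := by
  obtain ⟨⟨K, ⟨hKp⟩, hKobj⟩, -⟩ := hfree FreeFP (fun i => ([i] : FreeFP))
  haveI := hKp
  -- `K` is faithful
  obtain ⟨-, huniqC⟩ := hfree C p
  haveI : Limits.PreservesFiniteProducts (𝟭 C) := ⟨fun _ => inferInstance⟩
  obtain ⟨iso1⟩ := huniqC (K ⋙ interp p) (𝟭 C) inferInstance inferInstance
    (fun i => by rw [Functor.comp_obj, hKobj i]; rfl) (fun i => rfl)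
  haveI : (K ⋙ interp p).Faithful := Functor.Faithful.of_iso iso1.symm
  haveI : K.Faithful := Functor.Faithful.of_comp K (interp p)
  -- compare `H` with `K ⋙ interp qS`
  haveI : (interp qS).Faithful := interp_qS_faithful
  haveI : (K ⋙ interp qS).Faithful := Functor.Faithful.comp K (interp qS)
  obtain ⟨-, huniqS⟩ := hfree SetOmega qS
  obtain ⟨iso2⟩ := huniqS H (K ⋙ interp qS) hH inferInstance hobj
    (fun i => by rw [Functor.comp_obj, hKobj i]; rfl)
  exact Functor.Faithful.of_iso iso2.symm
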